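/- Let $F$ be an algebraically closed field of characteristic $2$ and $\tilde G$ the Klein four group. For $m \ge 2$ and any $\lambda \in F$, the type (ii) indecomposable module $V_{2m,\lambda}$ satisfies $\delta(\tilde G, V_{2m,\lambda}) = \gamma(\tilde G, V_{2m,\lambda}) = 4$. -/

import Mathlib

open MvPolynomial


/-- Action of `σ₁` on `F[V_{2m,λ}]` with variables `inl j = x_{j+1}`, `inr j = y_{j+1}`:
`σ₁(x_j) = x_j`, `σ₁(y_j) = y_j + x_j`. -/
noncomputable def s1Act2m {F : Type*} [Field F] (m : ℕ) :
    MvPolynomial (Fin m ⊕ Fin m) F →ₐ[F] MvPolynomial (Fin m ⊕ Fin m) F :=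
  aeval (Sum.elim (fun j => X (Sum.inl j)) (fun j => X (Sum.inr j) + X (Sum.inl j)))

/-- Action of `σ₂`: `σ₂(x_j) = x_j`, `σ₂(y₁) = y₁ + λx₁`, `σ₂(y_j) = y_j + λx_j + x_{j-1}`. -/
noncomputable def s2Act2m {F : Type*} [Field F] (m : ℕ) (lam : F) :
    MvPolynomial (Fin m ⊕ Fin m) F →ₐ[F] MvPolynomial (Fin m ⊕ Fin m) F :=
  aeval (Sum.elim (fun j => X (Sum.inl j))
    (fun j => X (Sum.inr j) + C lam * X (Sum.inl j) +
      if _ : 0 < (j : ℕ) then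
        X (Sum.inl ⟨(j : ℕ) - 1, lt_of_le_of_lt (Nat.sub_le _ _) j.isLt⟩) else 0))

/-- Action of `σ₁` on points of `V_{2m,λ}`. -/
def pt1Act2m {F : Type*} [Field F] (m : ℕ) (v : Fin m ⊕ Fin m → F) : Fin m ⊕ Fin m → F :=
  Sum.elim (fun j => v (Sum.inl j)) (fun j => v (Sum.inr j) + v (Sum.inl j))

/-- Action of `σ₂` on points of `V_{2m,λ}`. -/
def pt2Act2m {F : Type*} [Field F] (m : ℕ) (lam : F) (v : Fin m ⊕ Fin m → F) :
    Fin m ⊕ Fin m → F :=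
  Sum.elim (fun j => v (Sum.inl j))
    (fun j => v (Sum.inr j) + lam * v (Sum.inl j) +
      if _ : 0 < (j : ℕ) then
        v (Sum.inl ⟨(j : ℕ) - 1, lt_of_le_of_lt (Nat.sub_le _ _) j.isLt⟩) else 0)

/-- `ε(G̃,v)` for the Klein four group acting on `V_{2m,λ}`. -/
noncomputable def eps2m {F : Type*} [Field F] (m : ℕ) (lam : F) (v : Fin m ⊕ Fin m → F) : ℕ :=
  sInf {d : ℕ | 0 < d ∧ ∃ f : MvPolynomial (Fin m ⊕ Fin m) F,
    s1Act2m m f = f ∧ s2Act2m m lam f = f ∧ f.IsHomogeneous d ∧ eval v f ≠ 0}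

/-- `δ(G̃, V_{2m,λ})`. -/
noncomputable def delta2m {F : Type*} [Field F] (m : ℕ) (lam : F) : ℕ :=
  sSup {e : ℕ | ∃ v : Fin m ⊕ Fin m → F,
    v ≠ 0 ∧ pt1Act2m m v = v ∧ pt2Act2m m lam v = v ∧ e = eps2m m lam v}

/-- `γ(G̃, V_{2m,λ})`. -/
noncomputable def gamma2m {F : Type*} [Field F] (m : ℕ) (lam : F) : ℕ :=
  sSup {e : ℕ | ∃ v : Fin m ⊕ Fin m → F, v ≠ 0 ∧ e = eps2m m lam v}


namespace Stmt12Aux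

variable {F : Type*} [Field F]

/-- the four-variable model: 0 = u = x_{m-1}, 1 = s = x_m, 2 = w = y_{m-1}, 3 = t = y_m -/
noncomputable def tau1 : MvPolynomial (Fin 4) F →ₐ[F] MvPolynomial (Fin 4) F :=
  aeval (fun i : Fin 4 => if i = 2 then X 2 + X 0 else if i = 3 then X 3 + X 1 else X i)

noncomputable def tau2 (lam : F) : MvPolynomial (Fin 4) F →ₐ[F] MvPolynomial (Fin 4) F :=
  aeval (fun i : Fin 4 => if i = 2 then X 2 + C lam * X 0
    else if i = 3 then X 3 + C lam * X 1 + X 0 else X i)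

@[simp] lemma tau1_X0 : (tau1 (X 0) : MvPolynomial (Fin 4) F) = X 0 := by simp [tau1]
@[simp] lemma tau1_X1 : (tau1 (X 1) : MvPolynomial (Fin 4) F) = X 1 := by simp [tau1]
@[simp] lemma tau1_X2 : (tau1 (X 2) : MvPolynomial (Fin 4) F) = X 2 + X 0 := by simp [tau1]
@[simp] lemma tau1_X3 : (tau1 (X 3) : MvPolynomial (Fin 4) F) = X 3 + X 1 := by simp [tau1]
@[simp] lemma tau2_X0 (lam : F) : (tau2 lam (X 0) : MvPolynomial (Fin 4) F) = X 0 := by simp [tau2]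
@[simp] lemma tau2_X1 (lam : F) : (tau2 lam (X 1) : MvPolynomial (Fin 4) F) = X 1 := by simp [tau2]
@[simp] lemma tau2_X2 (lam : F) : (tau2 lam (X 2) : MvPolynomial (Fin 4) F) = X 2 + C lam * X 0 := by
  simp [tau2]
@[simp] lemma tau2_X3 (lam : F) :
    (tau2 lam (X 3) : MvPolynomial (Fin 4) F) = X 3 + C lam * X 1 + X 0 := by simp [tau2]

/-- exponent vectors -/
noncomputable def fs (a b c d : ℕ) : Fin 4 →₀ ℕ :=
  Finsupp.single 0 a + Finsupp.single 1 b + Finsupp.single 2 c + Finsupp.single 3 d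

lemma fs_apply0 (a b c d : ℕ) : fs a b c d 0 = a := by simp [fs, Finsupp.single_apply]
lemma fs_apply1 (a b c d : ℕ) : fs a b c d 1 = b := by simp [fs, Finsupp.single_apply]
lemma fs_apply2 (a b c d : ℕ) : fs a b c d 2 = c := by simp [fs, Finsupp.single_apply]
lemma fs_apply3 (a b c d : ℕ) : fs a b c d 3 = d := by simp [fs, Finsupp.single_apply]

lemma fs_eq_iff {a b c d a' b' c' d' : ℕ} :
    fs a b c d = fs a' b' c' d' ↔ (a = a' ∧ b = b' ∧ c = c' ∧ d = d') := by
  constructor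
  · intro h
    refine ⟨?_, ?_, ?_, ?_⟩
    · have := DFunLike.congr_fun h 0; simpa [fs_apply0] using this
    · have := DFunLike.congr_fun h 1; simpa [fs_apply1] using this
    · have := DFunLike.congr_fun h 2; simpa [fs_apply2] using this
    · have := DFunLike.congr_fun h 3; simpa [fs_apply3] using this
  · rintro ⟨rfl, rfl, rfl, rfl⟩; rfl

lemma nu_eq (ν : Fin 4 →₀ ℕ) : ν = fs (ν 0) (ν 1) (ν 2) (ν 3) := by
  ext i
  fin_cases i <;> simp [fs, Finsupp.single_apply]

lemma single3_eq (n : ℕ) : (Finsupp.single 3 n : Fin 4 →₀ ℕ) = fs 0 0 0 n := by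
  simp [fs]

lemma mono_fs (a b c d : ℕ) :
    (monomial (fs a b c d) (1 : F)) = X 0 ^ a * X 1 ^ b * X 2 ^ c * X 3 ^ d := by
  simp [X_pow_eq_monomial, monomial_mul, fs]

lemma mono_fs' (a b c d : ℕ) (r : F) :
    (monomial (fs a b c d) r) = C r * (X 0 ^ a * X 1 ^ b * X 2 ^ c * X 3 ^ d) := by
  rw [← mono_fs, C_mul_monomial, mul_one]


lemma expand1 (a b c e : ℕ) :
    (X 0 ^ a * X 1 ^ b * (X 2 + X 0) ^ c * (X 3 + X 1) ^ e : MvPolynomial (Fin 4) F)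
      = ∑ k ∈ Finset.range (c + 1), ∑ j ∈ Finset.range (e + 1),
          monomial (fs (a + (c - k)) (b + (e - j)) k j)
            (((c.choose k * e.choose j : ℕ) : F)) := by
  rw [add_pow, add_pow]
  simp only [Finset.mul_sum, Finset.sum_mul]
  rw [Finset.sum_comm]
  refine Finset.sum_congr rfl (fun k hk => Finset.sum_congr rfl (fun j hj => ?_))
  rw [mono_fs', map_natCast (C : F →+* MvPolynomial (Fin 4) F)]
  push_cast
  ring

lemma coeff_tau1 (μ : Fin 4 →₀ ℕ) (a b c e : ℕ) :
    coeff μ (tau1 (X 0 ^ a * X 1 ^ b * X 2 ^ c * X 3 ^ e) : MvPolynomial (Fin 4) F)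
      = ∑ k ∈ Finset.range (c + 1), ∑ j ∈ Finset.range (e + 1),
          if fs (a + (c - k)) (b + (e - j)) k j = μ
            then ((c.choose k * e.choose j : ℕ) : F) else 0 := by
  have himg : (tau1 (X 0 ^ a * X 1 ^ b * X 2 ^ c * X 3 ^ e) : MvPolynomial (Fin 4) F)
      = X 0 ^ a * X 1 ^ b * (X 2 + X 0) ^ c * (X 3 + X 1) ^ e := by
    simp [map_mul, map_pow]
  rw [himg, expand1]
  simp [coeff_sum, coeff_monomial]

lemma expand2 (lam : F) (a b c e : ℕ) :
    (X 0 ^ a * X 1 ^ b * (X 2 + C lam * X 0) ^ c * (X 3 + (C lam * X 1 + X 0)) ^ e :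
        MvPolynomial (Fin 4) F)
      = ∑ k ∈ Finset.range (c + 1), ∑ j ∈ Finset.range (e + 1), ∑ i ∈ Finset.range (e - j + 1),
          monomial (fs (a + (c - k) + (e - j - i)) (b + i) k j)
            (((c.choose k * (e.choose j * (e - j).choose i) : ℕ) : F) * lam ^ ((c - k) + i)) := by
  rw [add_pow, add_pow]
  simp only [Finset.mul_sum, Finset.sum_mul]
  rw [Finset.sum_comm]
  refine Finset.sum_congr rfl (fun k hk => ?_)
  refine Finset.sum_congr rfl (fun j hj => ?_)
  rw [add_pow]
  simp only [Finset.mul_sum, Finset.sum_mul]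
  refine Finset.sum_congr rfl (fun i hi => ?_)
  rw [mono_fs', map_mul C, map_natCast (C : F →+* MvPolynomial (Fin 4) F), C_pow]
  push_cast
  ring

lemma coeff_tau2 (lam : F) (μ : Fin 4 →₀ ℕ) (a b c e : ℕ) :
    coeff μ (tau2 lam (X 0 ^ a * X 1 ^ b * X 2 ^ c * X 3 ^ e) : MvPolynomial (Fin 4) F)
      = ∑ k ∈ Finset.range (c + 1), ∑ j ∈ Finset.range (e + 1), ∑ i ∈ Finset.range (e - j + 1),
          if fs (a + (c - k) + (e - j - i)) (b + i) k j = μ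
            then ((c.choose k * (e.choose j * (e - j).choose i) : ℕ) : F) * lam ^ ((c - k) + i)
            else 0 := by
  have himg : (tau2 lam (X 0 ^ a * X 1 ^ b * X 2 ^ c * X 3 ^ e) : MvPolynomial (Fin 4) F)
      = X 0 ^ a * X 1 ^ b * (X 2 + C lam * X 0) ^ c * (X 3 + (C lam * X 1 + X 0)) ^ e := by
    simp [map_mul, map_pow, add_assoc]
  rw [himg, expand2]
  simp [coeff_sum, coeff_monomial]


/-- lift a per-monomial coefficient identity to all polynomials -/
lemma lift5 (T : MvPolynomial (Fin 4) F →ₐ[F] MvPolynomial (Fin 4) F) (μ : Fin 4 →₀ ℕ)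
    (c1 c2 c3 c4 c5 : F) (ν1 ν2 ν3 ν4 ν5 : Fin 4 →₀ ℕ)
    (h : ∀ a b c e : ℕ, coeff μ (T (X 0 ^ a * X 1 ^ b * X 2 ^ c * X 3 ^ e))
        = c1 * (if fs a b c e = ν1 then 1 else 0) + c2 * (if fs a b c e = ν2 then 1 else 0)
        + c3 * (if fs a b c e = ν3 then 1 else 0) + c4 * (if fs a b c e = ν4 then 1 else 0)
        + c5 * (if fs a b c e = ν5 then 1 else 0))
    (g : MvPolynomial (Fin 4) F) :
    coeff μ (T g) = c1 * coeff ν1 g + c2 * coeff ν2 g + c3 * coeff ν3 g + c4 * coeff ν4 g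
        + c5 * coeff ν5 g := by
  induction g using MvPolynomial.induction_on' with
  | add p q hp hq => simp only [map_add, coeff_add, hp, hq]; ring
  | monomial ν r =>
      rw [show ν = fs (ν 0) (ν 1) (ν 2) (ν 3) from nu_eq ν]
      have hmon : (monomial (fs (ν 0) (ν 1) (ν 2) (ν 3)) r : MvPolynomial (Fin 4) F)
          = C r * (X 0 ^ (ν 0) * X 1 ^ (ν 1) * X 2 ^ (ν 2) * X 3 ^ (ν 3)) := mono_fs' _ _ _ _ r
      rw [hmon, map_mul, show (T (C r) : MvPolynomial (Fin 4) F) = C r from by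
        simpa [MvPolynomial.algebraMap_eq] using T.commutes r, coeff_C_mul, h]
      rw [← mono_fs (ν 0) (ν 1) (ν 2) (ν 3)]
      simp only [coeff_C_mul, coeff_monomial]
      simp only [mul_ite, mul_one, mul_zero]
      split_ifs <;> ring


lemma sumA (a b c e : ℕ) :
    coeff (fs 0 1 0 0) (tau1 (X 0 ^ a * X 1 ^ b * X 2 ^ c * X 3 ^ e) : MvPolynomial (Fin 4) F)
      = (if fs a b c e = fs 0 1 0 0 then 1 else 0)
        + (if fs a b c e = fs 0 0 0 1 then 1 else 0) := by
  rw [coeff_tau1]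
  simp only [fs_eq_iff]
  by_cases h1 : a = 0 ∧ b = 1 ∧ c = 0 ∧ e = 0
  · obtain ⟨rfl, rfl, rfl, rfl⟩ := h1
    norm_num [Finset.sum_range_succ, fs_eq_iff]
  by_cases h2 : a = 0 ∧ b = 0 ∧ c = 0 ∧ e = 1
  · obtain ⟨rfl, rfl, rfl, rfl⟩ := h2
    norm_num [Finset.sum_range_succ, fs_eq_iff]
  rw [if_neg h1, if_neg h2]
  refine (Finset.sum_eq_zero fun k hk => Finset.sum_eq_zero fun j hj => ?_).trans (by norm_num)
  simp only [Finset.mem_range] at hk hj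
  rw [if_neg]
  omega


lemma sumB (h2F : (2 : F) = 0) (a b c e : ℕ) :
    coeff (fs 0 1 0 2) (tau1 (X 0 ^ a * X 1 ^ b * X 2 ^ c * X 3 ^ e) : MvPolynomial (Fin 4) F)
      = (if fs a b c e = fs 0 1 0 2 then 1 else 0)
        + (if fs a b c e = fs 0 0 0 3 then 1 else 0) := by
  rw [coeff_tau1]
  simp only [fs_eq_iff]
  by_cases h1 : a = 0 ∧ b = 1 ∧ c = 0 ∧ e = 2
  · obtain ⟨rfl, rfl, rfl, rfl⟩ := h1
    norm_num [Finset.sum_range_succ, fs_eq_iff]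
  by_cases h2 : a = 0 ∧ b = 0 ∧ c = 0 ∧ e = 3
  · obtain ⟨rfl, rfl, rfl, rfl⟩ := h2
    norm_num [Finset.sum_range_succ, fs_eq_iff]
    linear_combination h2F
  rw [if_neg h1, if_neg h2]
  refine (Finset.sum_eq_zero fun k hk => Finset.sum_eq_zero fun j hj => ?_).trans (by norm_num)
  simp only [Finset.mem_range] at hk hj
  rw [if_neg]
  omega

lemma sumC (a b c e : ℕ) :
    coeff (fs 0 1 1 0) (tau1 (X 0 ^ a * X 1 ^ b * X 2 ^ c * X 3 ^ e) : MvPolynomial (Fin 4) F)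
      = (if fs a b c e = fs 0 1 1 0 then 1 else 0)
        + (if fs a b c e = fs 0 0 1 1 then 1 else 0) := by
  rw [coeff_tau1]
  simp only [fs_eq_iff]
  by_cases h1 : a = 0 ∧ b = 1 ∧ c = 1 ∧ e = 0
  · obtain ⟨rfl, rfl, rfl, rfl⟩ := h1
    norm_num [Finset.sum_range_succ, fs_eq_iff]
  by_cases h2 : a = 0 ∧ b = 0 ∧ c = 1 ∧ e = 1
  · obtain ⟨rfl, rfl, rfl, rfl⟩ := h2
    norm_num [Finset.sum_range_succ, fs_eq_iff]
  rw [if_neg h1, if_neg h2]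
  refine (Finset.sum_eq_zero fun k hk => Finset.sum_eq_zero fun j hj => ?_).trans (by norm_num)
  simp only [Finset.mem_range] at hk hj
  rw [if_neg]
  omega

lemma sumD (a b c e : ℕ) :
    coeff (fs 1 1 0 0) (tau1 (X 0 ^ a * X 1 ^ b * X 2 ^ c * X 3 ^ e) : MvPolynomial (Fin 4) F)
      = (if fs a b c e = fs 1 1 0 0 then 1 else 0)
        + (if fs a b c e = fs 1 0 0 1 then 1 else 0)
        + (if fs a b c e = fs 0 1 1 0 then 1 else 0)
        + (if fs a b c e = fs 0 0 1 1 then 1 else 0) := by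
  rw [coeff_tau1]
  simp only [fs_eq_iff]
  by_cases h1 : a = 1 ∧ b = 1 ∧ c = 0 ∧ e = 0
  · obtain ⟨rfl, rfl, rfl, rfl⟩ := h1
    norm_num [Finset.sum_range_succ, fs_eq_iff]
  by_cases h2 : a = 1 ∧ b = 0 ∧ c = 0 ∧ e = 1
  · obtain ⟨rfl, rfl, rfl, rfl⟩ := h2
    norm_num [Finset.sum_range_succ, fs_eq_iff]
  by_cases h3 : a = 0 ∧ b = 1 ∧ c = 1 ∧ e = 0
  · obtain ⟨rfl, rfl, rfl, rfl⟩ := h3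
    norm_num [Finset.sum_range_succ, fs_eq_iff]
  by_cases h4 : a = 0 ∧ b = 0 ∧ c = 1 ∧ e = 1
  · obtain ⟨rfl, rfl, rfl, rfl⟩ := h4
    norm_num [Finset.sum_range_succ, fs_eq_iff]
  rw [if_neg h1, if_neg h2, if_neg h3, if_neg h4]
  refine (Finset.sum_eq_zero fun k hk => Finset.sum_eq_zero fun j hj => ?_).trans (by norm_num)
  simp only [Finset.mem_range] at hk hj
  rw [if_neg]
  omega

lemma sumE (a b c e : ℕ) :
    coeff (fs 0 2 0 0) (tau1 (X 0 ^ a * X 1 ^ b * X 2 ^ c * X 3 ^ e) : MvPolynomial (Fin 4) F)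
      = (if fs a b c e = fs 0 2 0 0 then 1 else 0)
        + (if fs a b c e = fs 0 1 0 1 then 1 else 0)
        + (if fs a b c e = fs 0 0 0 2 then 1 else 0) := by
  rw [coeff_tau1]
  simp only [fs_eq_iff]
  by_cases h1 : a = 0 ∧ b = 2 ∧ c = 0 ∧ e = 0
  · obtain ⟨rfl, rfl, rfl, rfl⟩ := h1
    norm_num [Finset.sum_range_succ, fs_eq_iff]
  by_cases h2 : a = 0 ∧ b = 1 ∧ c = 0 ∧ e = 1
  · obtain ⟨rfl, rfl, rfl, rfl⟩ := h2
    norm_num [Finset.sum_range_succ, fs_eq_iff]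
  by_cases h3 : a = 0 ∧ b = 0 ∧ c = 0 ∧ e = 2
  · obtain ⟨rfl, rfl, rfl, rfl⟩ := h3
    norm_num [Finset.sum_range_succ, fs_eq_iff]
  rw [if_neg h1, if_neg h2, if_neg h3]
  refine (Finset.sum_eq_zero fun k hk => Finset.sum_eq_zero fun j hj => ?_).trans (by norm_num)
  simp only [Finset.mem_range] at hk hj
  rw [if_neg]
  omega

set_option maxHeartbeats 2000000 in
lemma sumF (lam : F) (h2F : (2 : F) = 0) (a b c e : ℕ) :
    coeff (fs 1 1 0 0) (tau2 lam (X 0 ^ a * X 1 ^ b * X 2 ^ c * X 3 ^ e) : MvPolynomial (Fin 4) F)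
      = (if fs a b c e = fs 1 1 0 0 then 1 else 0)
        + lam * (if fs a b c e = fs 0 1 1 0 then 1 else 0)
        + (if fs a b c e = fs 0 1 0 1 then 1 else 0)
        + lam * (if fs a b c e = fs 1 0 0 1 then 1 else 0)
        + lam ^ 2 * (if fs a b c e = fs 0 0 1 1 then 1 else 0) := by
  rw [coeff_tau2]
  simp only [fs_eq_iff]
  by_cases h1 : a = 1 ∧ b = 1 ∧ c = 0 ∧ e = 0
  · obtain ⟨rfl, rfl, rfl, rfl⟩ := h1
    norm_num [Finset.sum_range_succ, fs_eq_iff]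
  by_cases h2 : a = 0 ∧ b = 1 ∧ c = 1 ∧ e = 0
  · obtain ⟨rfl, rfl, rfl, rfl⟩ := h2
    norm_num [Finset.sum_range_succ, fs_eq_iff]
  by_cases h3 : a = 0 ∧ b = 1 ∧ c = 0 ∧ e = 1
  · obtain ⟨rfl, rfl, rfl, rfl⟩ := h3
    norm_num [Finset.sum_range_succ, fs_eq_iff]
  by_cases h4 : a = 1 ∧ b = 0 ∧ c = 0 ∧ e = 1
  · obtain ⟨rfl, rfl, rfl, rfl⟩ := h4
    norm_num [Finset.sum_range_succ, fs_eq_iff]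
  by_cases h5 : a = 0 ∧ b = 0 ∧ c = 1 ∧ e = 1
  · obtain ⟨rfl, rfl, rfl, rfl⟩ := h5
    norm_num [Finset.sum_range_succ, fs_eq_iff]
    try ring
  have hz : (∑ k ∈ Finset.range (c + 1), ∑ j ∈ Finset.range (e + 1),
      ∑ i ∈ Finset.range (e - j + 1),
        if a + (c - k) + (e - j - i) = 1 ∧ b + i = 1 ∧ k = 0 ∧ j = 0
          then ((c.choose k * (e.choose j * (e - j).choose i) : ℕ) : F) * lam ^ (c - k + i)
          else 0) = 0 := by
    apply Finset.sum_eq_zero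
    intro k hk
    apply Finset.sum_eq_zero
    intro j hj
    apply Finset.sum_eq_zero
    intro i hi
    simp only [Finset.mem_range] at hk hj hi
    by_cases hcond : a + (c - k) + (e - j - i) = 1 ∧ b + i = 1 ∧ k = 0 ∧ j = 0
    · have hvals : a = 0 ∧ b = 0 ∧ c = 0 ∧ e = 2 ∧ k = 0 ∧ j = 0 ∧ i = 1 := by omega
      obtain ⟨rfl, rfl, rfl, rfl, rfl, rfl, rfl⟩ := hvals
      rw [if_pos hcond]
      push_cast [Nat.choose_one_right, Nat.choose_self, Nat.choose_zero_right]
      linear_combination lam * h2F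
    · rw [if_neg hcond]
  rw [hz, if_neg h1, if_neg h2, if_neg h3, if_neg h4, if_neg h5]
  ring


lemma core4 (lam : F) (h2F : (2 : F) = 0) (d : ℕ) (hd : d = 1 ∨ d = 2 ∨ d = 3)
    (g : MvPolynomial (Fin 4) F) (hg1 : tau1 g = g) (hg2 : tau2 lam g = g) :
    coeff (fs 0 0 0 d) g = 0 := by
  rcases hd with rfl | rfl | rfl
  · have hA := lift5 (F := F) tau1 (fs 0 1 0 0) 1 1 0 0 0
      (fs 0 1 0 0) (fs 0 0 0 1) 0 0 0
      (fun a b c e => by rw [sumA]; ring) g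
    rw [hg1] at hA
    linear_combination -hA
  · have hC := lift5 (F := F) tau1 (fs 0 1 1 0) 1 1 0 0 0
      (fs 0 1 1 0) (fs 0 0 1 1) 0 0 0
      (fun a b c e => by rw [sumC]; ring) g
    have hD := lift5 (F := F) tau1 (fs 1 1 0 0) 1 1 1 1 0
      (fs 1 1 0 0) (fs 1 0 0 1) (fs 0 1 1 0) (fs 0 0 1 1) 0
      (fun a b c e => by rw [sumD]; ring) g
    have hE := lift5 (F := F) tau1 (fs 0 2 0 0) 1 1 1 0 0
      (fs 0 2 0 0) (fs 0 1 0 1) (fs 0 0 0 2) 0 0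
      (fun a b c e => by rw [sumE]; ring) g
    have hF := lift5 (F := F) (tau2 lam) (fs 1 1 0 0) 1 lam 1 lam (lam ^ 2)
      (fs 1 1 0 0) (fs 0 1 1 0) (fs 0 1 0 1) (fs 1 0 0 1) (fs 0 0 1 1)
      (fun a b c e => by rw [sumF lam h2F]; ring) g
    rw [hg1] at hC hD hE
    rw [hg2] at hF
    linear_combination (lam ^ 2 - lam) * hC - lam * hD - hE + hF
      + (lam ^ 2 * coeff (fs 0 0 1 1) g - lam * coeff (fs 0 0 1 1) g) * h2F
  · have hB := lift5 (F := F) tau1 (fs 0 1 0 2) 1 1 0 0 0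
      (fs 0 1 0 2) (fs 0 0 0 3) 0 0 0
      (fun a b c e => by rw [sumB h2F]; ring) g
    rw [hg1] at hB
    linear_combination -hB


lemma eval_aeval' {σ τ : Type*} (g : σ → MvPolynomial τ F) (x : τ → F)
    (f : MvPolynomial σ F) :
    eval x (aeval g f) = eval (fun i => eval x (g i)) f := by
  induction f using MvPolynomial.induction_on with
  | C a => simp
  | add p q hp hq => simp only [map_add, hp, hq]
  | mul_X p i hp => simp only [map_mul, hp, aeval_X, eval_X]

lemma finsupp_degree_single {σ : Type*} (k : σ) (c : ℕ) :
    (Finsupp.single k c).degree = c := by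
  classical
  rcases Nat.eq_zero_or_pos c with rfl | hc
  · simp [Finsupp.degree]
  · rw [Finsupp.degree_apply, Finsupp.support_single_ne_zero _ hc.ne']
    simp

lemma eval_indicator {σ : Type*} [DecidableEq σ] (k : σ) {n : ℕ} (hn : 0 < n)
    (g : MvPolynomial σ F) (hg : g.IsHomogeneous n) :
    eval (fun i => if i = k then (1 : F) else 0) g = coeff (Finsupp.single k n) g := by
  rw [eval_eq]
  have hterm : ∀ ν ∈ g.support, ν ≠ Finsupp.single k n →
      coeff ν g * ∏ i ∈ ν.support, (if i = k then (1 : F) else 0) ^ ν i = 0 := by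
    intro ν hν hne
    have hdeg : ν.degree = n := by
      rw [Finsupp.degree_eq_weight_one]
      exact hg (mem_support_iff.mp hν)
    have hsub : ¬ ν.support ⊆ {k} := by
      intro hsubset
      have hνs : ν = Finsupp.single k (ν k) := Finsupp.support_subset_singleton.mp hsubset
      have : ν k = n := by
        rw [hνs, finsupp_degree_single] at hdeg; exact hdeg
      exact hne (by rw [hνs, this])
    obtain ⟨i, hi, hik⟩ : ∃ i ∈ ν.support, i ≠ k := by
      by_contra h
      push_neg at h
      exact hsub fun i hi => Finset.mem_singleton.mpr (h i hi)
    rw [Finset.prod_eq_zero hi, mul_zero]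
    rw [if_neg hik]
    exact zero_pow (Finsupp.mem_support_iff.mp hi)
  by_cases hmem : Finsupp.single k n ∈ g.support
  · rw [Finset.sum_eq_single_of_mem _ hmem fun ν h hne => hterm ν h hne]
    rw [Finsupp.support_single_ne_zero _ hn.ne']
    simp
  · rw [Finset.sum_eq_zero fun ν hν => hterm ν hν (by rintro rfl; exact hmem hν), eq_comm]
    exact notMem_support_iff.mp hmem


noncomputable def rho (m : ℕ) : Fin m ⊕ Fin m → MvPolynomial (Fin 4) F :=
  Sum.elim
    (fun j => if (j : ℕ) = m - 2 then X 0 else if (j : ℕ) = m - 1 then X 1 else 0)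
    (fun j => if (j : ℕ) = m - 2 then X 2 else if (j : ℕ) = m - 1 then X 3 else 0)

lemma rho_homog (m : ℕ) : ∀ i, ((rho (F := F) m) i).IsHomogeneous 1 := by
  rintro (j | j) <;> simp only [rho, Sum.elim_inl, Sum.elim_inr] <;> split_ifs <;>
    first
      | exact isHomogeneous_X _ _
      | exact isHomogeneous_zero _ _ _

lemma inter1 (m : ℕ) (hm : 2 ≤ m) :
    (aeval (rho m) : MvPolynomial (Fin m ⊕ Fin m) F →ₐ[F] MvPolynomial (Fin 4) F).comp
        (s1Act2m m)
      = (tau1 (F := F)).comp (aeval (rho m)) := by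
  apply MvPolynomial.algHom_ext
  rintro (j | j)
  · simp only [AlgHom.comp_apply, s1Act2m, aeval_X, Sum.elim_inl, rho]
    split_ifs <;> simp
  · simp only [AlgHom.comp_apply, s1Act2m, aeval_X, Sum.elim_inr, Sum.elim_inl, map_add, rho]
    split_ifs <;> simp

lemma inter2 (m : ℕ) (hm : 2 ≤ m) (lam : F) :
    (aeval (rho m) : MvPolynomial (Fin m ⊕ Fin m) F →ₐ[F] MvPolynomial (Fin 4) F).comp
        (s2Act2m m lam)
      = (tau2 lam).comp (aeval (rho m)) := by
  apply MvPolynomial.algHom_ext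
  rintro (j | j)
  · simp only [AlgHom.comp_apply, s2Act2m, aeval_X, Sum.elim_inl, rho]
    split_ifs <;> simp
  · have hjlt : (j : ℕ) < m := j.isLt
    by_cases h0 : 0 < (j : ℕ)
    · simp only [AlgHom.comp_apply, s2Act2m, aeval_X, Sum.elim_inr, Sum.elim_inl, map_add,
        map_mul, aeval_C, rho, dif_pos h0, Fin.val_mk]
      split_ifs <;> first | (exfalso; omega) | simp [MvPolynomial.algebraMap_eq]
    · simp only [AlgHom.comp_apply, s2Act2m, aeval_X, Sum.elim_inr, Sum.elim_inl, map_add,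
        map_mul, aeval_C, rho, dif_neg h0, Fin.val_mk]
      split_ifs <;> first | (exfalso; omega) | simp [MvPolynomial.algebraMap_eq]


/-- the distinguished point: `y_m = 1`, all else `0`. -/
noncomputable def v0 (m : ℕ) : Fin m ⊕ Fin m → F :=
  Sum.elim (fun _ => 0) (fun j => if (j : ℕ) = m - 1 then 1 else 0)

lemma eval_rho_w0 (m : ℕ) (hm : 2 ≤ m) (i : Fin m ⊕ Fin m) :
    eval (fun i : Fin 4 => if i = 3 then (1 : F) else 0) (rho m i) = v0 m i := by
  rcases i with j | j <;>
    · have : (j : ℕ) < m := j.isLt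
      simp only [rho, v0, Sum.elim_inl, Sum.elim_inr]
      split_ifs <;> first | (exfalso; omega) | simp

lemma eval_psi (m : ℕ) (hm : 2 ≤ m) (f : MvPolynomial (Fin m ⊕ Fin m) F) :
    eval (fun i : Fin 4 => if i = 3 then (1 : F) else 0) (aeval (rho m) f)
      = eval (v0 m) f := by
  rw [eval_aeval', funext (eval_rho_w0 m hm)]

lemma core_orig (m : ℕ) (hm : 2 ≤ m) (lam : F) (h2F : (2 : F) = 0) (d : ℕ)
    (hd : d = 1 ∨ d = 2 ∨ d = 3) (f : MvPolynomial (Fin m ⊕ Fin m) F)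
    (hf1 : s1Act2m m f = f) (hf2 : s2Act2m m lam f = f) (hh : f.IsHomogeneous d) :
    eval (v0 m) f = 0 := by
  have hg1 : tau1 (aeval (rho (F := F) m) f) = aeval (rho (F := F) m) f := by
    have h := AlgHom.congr_fun (inter1 (F := F) m hm) f
    simp only [AlgHom.comp_apply, hf1] at h
    exact h.symm
  have hg2 : tau2 lam (aeval (rho (F := F) m) f) = aeval (rho (F := F) m) f := by
    have h := AlgHom.congr_fun (inter2 (F := F) m hm lam) f
    simp only [AlgHom.comp_apply, hf2] at h
    exact h.symm
  have hgh : (aeval (rho (F := F) m) f).IsHomogeneous d := by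
    simpa using hh.aeval (rho (F := F) m) (rho_homog m)
  have hd0 : 0 < d := by omega
  rw [← eval_psi m hm f, eval_indicator (3 : Fin 4) hd0 _ hgh, single3_eq]
  exact core4 lam h2F d hd _ hg1 hg2


noncomputable def tpoly (m : ℕ) (lam : F) (j : Fin m) : MvPolynomial (Fin m ⊕ Fin m) F :=
  C lam * X (Sum.inl j) +
    if _ : 0 < (j : ℕ) then
      X (Sum.inl ⟨(j : ℕ) - 1, lt_of_le_of_lt (Nat.sub_le _ _) j.isLt⟩) else 0

noncomputable def normP (m : ℕ) (lam : F) (j : Fin m) : MvPolynomial (Fin m ⊕ Fin m) F :=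
  X (Sum.inr j) * (X (Sum.inr j) + X (Sum.inl j)) * (X (Sum.inr j) + tpoly m lam j)
    * (X (Sum.inr j) + X (Sum.inl j) + tpoly m lam j)

lemma s1_tpoly (m : ℕ) (lam : F) (j : Fin m) :
    s1Act2m m (tpoly m lam j) = tpoly m lam j := by
  by_cases h0 : 0 < (j : ℕ) <;>
    simp [tpoly, s1Act2m, h0]

lemma s2_tpoly (m : ℕ) (lam : F) (j : Fin m) :
    s2Act2m m lam (tpoly m lam j) = tpoly m lam j := by
  by_cases h0 : 0 < (j : ℕ) <;>
    simp [tpoly, s2Act2m, h0]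

lemma s1_Xinr (m : ℕ) (j : Fin m) :
    s1Act2m (F := F) m (X (Sum.inr j)) = X (Sum.inr j) + X (Sum.inl j) := by
  simp [s1Act2m]

lemma s1_Xinl (m : ℕ) (j : Fin m) :
    s1Act2m (F := F) m (X (Sum.inl j)) = X (Sum.inl j) := by
  simp [s1Act2m]

lemma s2_Xinl (m : ℕ) (lam : F) (j : Fin m) :
    s2Act2m m lam (X (Sum.inl j)) = X (Sum.inl j) := by
  simp [s2Act2m]

lemma s2_Xinr (m : ℕ) (lam : F) (j : Fin m) :
    s2Act2m m lam (X (Sum.inr j)) = X (Sum.inr j) + tpoly m lam j := by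
  simp [s2Act2m, tpoly, add_assoc]

lemma s1_normP (m : ℕ) (lam : F) (h2F : (2 : F) = 0) (j : Fin m) :
    s1Act2m m (normP m lam j) = normP m lam j := by
  have htwo : (2 : MvPolynomial (Fin m ⊕ Fin m) F) = 0 := by
    rw [← map_ofNat (C : F →+* MvPolynomial (Fin m ⊕ Fin m) F) 2, h2F, map_zero]
  set Y := X (σ := Fin m ⊕ Fin m) (R := F) (Sum.inr j)
  set Xx := X (σ := Fin m ⊕ Fin m) (R := F) (Sum.inl j)
  set T := tpoly m lam j
  simp only [normP, map_mul, map_add, s1_tpoly, s1_Xinr, s1_Xinl]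
  show (Y + Xx) * (Y + Xx + Xx) * (Y + Xx + T) * (Y + Xx + Xx + T) = Y * (Y + Xx) * (Y + T) * (Y + Xx + T)
  linear_combination (Xx^2*T^2 + (3:MvPolynomial (Fin m ⊕ Fin m) F)*Xx^3*T + 2*Xx^4
    + Y*Xx*T^2 + 6*Y*Xx^2*T + 6*Y*Xx^3 + 3*Y^2*Xx*T + 6*Y^2*Xx^2 + 2*Y^3*Xx) * htwo

lemma s2_normP (m : ℕ) (lam : F) (h2F : (2 : F) = 0) (j : Fin m) :
    s2Act2m m lam (normP m lam j) = normP m lam j := by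
  have htwo : (2 : MvPolynomial (Fin m ⊕ Fin m) F) = 0 := by
    rw [← map_ofNat (C : F →+* MvPolynomial (Fin m ⊕ Fin m) F) 2, h2F, map_zero]
  set Y := X (σ := Fin m ⊕ Fin m) (R := F) (Sum.inr j)
  set Xx := X (σ := Fin m ⊕ Fin m) (R := F) (Sum.inl j)
  set T := tpoly m lam j
  simp only [normP, map_mul, map_add, s2_tpoly, s2_Xinr, s2_Xinl]
  show (Y + T) * (Y + T + Xx) * (Y + T + T) * (Y + T + Xx + T) = Y * (Y + Xx) * (Y + T) * (Y + Xx + T)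
  linear_combination ((2:MvPolynomial (Fin m ⊕ Fin m) F)*T^4 + 3*Xx*T^3 + Xx^2*T^2
    + 6*Y*T^3 + 6*Y*Xx*T^2 + Y*Xx^2*T + 6*Y^2*T^2 + 3*Y^2*Xx*T + 2*Y^3*T) * htwo

lemma tpoly_homog (m : ℕ) (lam : F) (j : Fin m) : (tpoly m lam j).IsHomogeneous 1 := by
  by_cases h0 : 0 < (j : ℕ)
  · rw [tpoly, dif_pos h0]
    exact (isHomogeneous_C_mul_X _ _).add (isHomogeneous_X _ _)
  · rw [tpoly, dif_neg h0]
    exact (isHomogeneous_C_mul_X _ _).add (isHomogeneous_zero _ _ _)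

lemma normP_homog (m : ℕ) (lam : F) (j : Fin m) : (normP m lam j).IsHomogeneous 4 := by
  have h1 := isHomogeneous_X (R := F) (σ := Fin m ⊕ Fin m) (Sum.inr j)
  have h2 := isHomogeneous_X (R := F) (σ := Fin m ⊕ Fin m) (Sum.inl j)
  have h3 := tpoly_homog m lam j
  simpa [normP] using ((h1.mul (h1.add h2)).mul (h1.add h3)).mul ((h1.add h2).add h3)

lemma eval_normP (m : ℕ) (lam : F) (v : Fin m ⊕ Fin m → F)
    (hx : ∀ j : Fin m, v (Sum.inl j) = 0) (j : Fin m) :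
    eval v (normP m lam j) = v (Sum.inr j) ^ 4 := by
  have ht : eval v (tpoly m lam j) = 0 := by
    by_cases h0 : 0 < (j : ℕ) <;> simp [tpoly, h0, hx]
  simp only [normP, map_mul, map_add, ht, eval_X, hx, add_zero]
  ring


lemma v0_ne (m : ℕ) (hm : 2 ≤ m) : (v0 m : Fin m ⊕ Fin m → F) ≠ 0 := by
  intro h
  have := congrFun h (Sum.inr ⟨m - 1, by omega⟩)
  simp [v0] at this

lemma v0_fixed1 (m : ℕ) : pt1Act2m m (v0 m : Fin m ⊕ Fin m → F) = v0 m := by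
  funext i
  rcases i with j | j <;> simp [pt1Act2m, v0]

lemma v0_fixed2 (m : ℕ) (lam : F) : pt2Act2m m lam (v0 m : Fin m ⊕ Fin m → F) = v0 m := by
  funext i
  rcases i with j | j
  · simp [pt2Act2m, v0]
  · by_cases h0 : 0 < (j : ℕ) <;> simp [pt2Act2m, v0, h0]

lemma eps_le_four (m : ℕ) (hm : 2 ≤ m) (lam : F) (h2F : (2 : F) = 0)
    (v : Fin m ⊕ Fin m → F) (hv : v ≠ 0) : eps2m m lam v ≤ 4 := by
  by_cases hx : ∀ j : Fin m, v (Sum.inl j) = 0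
  · have hy : ∃ j : Fin m, v (Sum.inr j) ≠ 0 := by
      by_contra h
      push_neg at h
      apply hv
      funext i
      rcases i with j | j
      · exact hx j
      · exact h j
    obtain ⟨j, hj⟩ := hy
    apply Nat.sInf_le
    refine ⟨by norm_num, normP m lam j, s1_normP m lam h2F j, s2_normP m lam h2F j,
      normP_homog m lam j, ?_⟩
    rw [eval_normP m lam v hx j]
    exact pow_ne_zero _ hj
  · push_neg at hx
    obtain ⟨j, hj⟩ := hx
    have h1 : (1 : ℕ) ∈ {d : ℕ | 0 < d ∧ ∃ f : MvPolynomial (Fin m ⊕ Fin m) F,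
        s1Act2m m f = f ∧ s2Act2m m lam f = f ∧ f.IsHomogeneous d ∧ eval v f ≠ 0} :=
      ⟨one_pos, X (Sum.inl j), s1_Xinl m j, s2_Xinl m lam j, isHomogeneous_X _ _,
        by simpa using hj⟩
    exact le_trans (Nat.sInf_le h1) (by norm_num)

lemma eps_v0 (m : ℕ) (hm : 2 ≤ m) (lam : F) (h2F : (2 : F) = 0) :
    eps2m m lam (v0 m : Fin m ⊕ Fin m → F) = 4 := by
  have hx : ∀ j : Fin m, (v0 m : Fin m ⊕ Fin m → F) (Sum.inl j) = 0 := fun j => rfl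
  have h4 : (4 : ℕ) ∈ {d : ℕ | 0 < d ∧ ∃ f : MvPolynomial (Fin m ⊕ Fin m) F,
      s1Act2m m f = f ∧ s2Act2m m lam f = f ∧ f.IsHomogeneous d ∧ eval (v0 m) f ≠ 0} := by
    refine ⟨by norm_num, normP m lam ⟨m - 1, by omega⟩, s1_normP m lam h2F _,
      s2_normP m lam h2F _, normP_homog m lam _, ?_⟩
    rw [eval_normP m lam _ hx]
    simp [v0]
  refine le_antisymm (Nat.sInf_le h4) (le_csInf ⟨4, h4⟩ ?_)
  rintro b ⟨hb0, f, hf1, hf2, hh, hev⟩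
  by_contra hlt
  push_neg at hlt
  have hd : b = 1 ∨ b = 2 ∨ b = 3 := by omega
  exact hev (core_orig m hm lam h2F b hd f hf1 hf2 hh)

lemma delta_gamma (m : ℕ) (hm : 2 ≤ m) (lam : F) (h2F : (2 : F) = 0) :
    delta2m (F := F) m lam = 4 ∧ gamma2m (F := F) m lam = 4 := by
  constructor
  · have hmem : (4 : ℕ) ∈ {e : ℕ | ∃ v : Fin m ⊕ Fin m → F,
        v ≠ 0 ∧ pt1Act2m m v = v ∧ pt2Act2m m lam v = v ∧ e = eps2m m lam v} :=
      ⟨v0 m, v0_ne m hm, v0_fixed1 m, v0_fixed2 m lam, (eps_v0 m hm lam h2F).symm⟩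
    have hbd : ∀ e ∈ {e : ℕ | ∃ v : Fin m ⊕ Fin m → F,
        v ≠ 0 ∧ pt1Act2m m v = v ∧ pt2Act2m m lam v = v ∧ e = eps2m m lam v}, e ≤ 4 := by
      rintro e ⟨v, hv, -, -, rfl⟩
      exact eps_le_four m hm lam h2F v hv
    exact le_antisymm (csSup_le ⟨4, hmem⟩ hbd) (le_csSup ⟨4, hbd⟩ hmem)
  · have hmem : (4 : ℕ) ∈ {e : ℕ | ∃ v : Fin m ⊕ Fin m → F, v ≠ 0 ∧ e = eps2m m lam v} :=
      ⟨v0 m, v0_ne m hm, (eps_v0 m hm lam h2F).symm⟩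
    have hbd : ∀ e ∈ {e : ℕ | ∃ v : Fin m ⊕ Fin m → F, v ≠ 0 ∧ e = eps2m m lam v}, e ≤ 4 := by
      rintro e ⟨v, hv, rfl⟩
      exact eps_le_four m hm lam h2F v hv
    exact le_antisymm (csSup_le ⟨4, hmem⟩ hbd) (le_csSup ⟨4, hbd⟩ hmem)

end Stmt12Aux

theorem stmt12 {F : Type*} [Field F] [IsAlgClosed F] [CharP F 2]
    (m : ℕ) (hm : 2 ≤ m) (lam : F) :
    delta2m (F := F) m lam = 4 ∧ gamma2m (F := F) m lam = 4 := by
  have h2F : (2 : F) = 0 := by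
    have := CharP.cast_eq_zero F 2
    exact_mod_cast this
  exact Stmt12Aux.delta_gamma m hm lam h2F
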